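/- arXiv:2405.15057 — 3 statements merged into one kernel-verified Lean document; each statement's English description precedes it below -/
import Mathlib

section
/- Let q = p^m with p prime, let B = {α₁,…,α_m} be a basis of F_{p^m} over F_p with dual basis {β₁,…,β_m} (so tr(αᵢβⱼ) = δ_{ij}). Define Ψ_B : F_{p^m}^{2n} → F_p^{2mn} by expanding the first half of each vector in the basis B and the second half in the dual basis. Then for all c, d ∈ F_{p^m}^{2n}, the trace-symplectic inner product ⟨c, d⟩_T equals the symplectic inner product ⟨Ψ_B(c), Ψ_B(d)⟩_S over F_p. -/
lemma aux6 (p : ℕ) [Fact p.Prime] (F : Type) [Field F] [Fintype F]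
    [Algebra (ZMod p) F] (m : ℕ) (B D : Module.Basis (Fin m) (ZMod p) F)
    (hdual : ∀ i j, Algebra.trace (ZMod p) F (B i * D j) = if i = j then 1 else 0)
    (x y : F) :
    Algebra.trace (ZMod p) F (x * y) = ∑ j, B.repr x j * D.repr y j := by
  conv_lhs => rw [← B.sum_repr x, ← D.sum_repr y]
  simp only [Finset.sum_mul_sum, map_sum, smul_mul_smul_comm, map_smul, hdual,
    smul_eq_mul, mul_ite, mul_one, mul_zero, Finset.sum_ite_eq, Finset.mem_univ, if_true]

/-- Expanding the first half of each vector in a basis `B` of `F_{p^m}/F_p` and the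
second half in the dual basis `D` (with `tr(Bᵢ·Dⱼ) = δᵢⱼ`), the trace-symplectic inner
product over `F_{p^m}` equals the symplectic inner product of the expansions over `F_p`. -/
theorem stmt6 (p : ℕ) [Fact p.Prime] (F : Type) [Field F] [Fintype F]
    [Algebra (ZMod p) F] (m : ℕ) (B D : Module.Basis (Fin m) (ZMod p) F)
    (hdual : ∀ i j, Algebra.trace (ZMod p) F (B i * D j) = if i = j then 1 else 0)
    (n : ℕ) (a b u v : Fin n → F) :
    (∑ i, Algebra.trace (ZMod p) F (a i * v i - b i * u i)) =
      (∑ i, ∑ j, B.repr (a i) j * D.repr (v i) j) -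
        ∑ i, ∑ j, D.repr (b i) j * B.repr (u i) j := by
  have hdual' : ∀ i j, Algebra.trace (ZMod p) F (D i * B j) = if i = j then 1 else 0 := by
    intro i j
    rw [mul_comm, hdual]
    simp [eq_comm]
  rw [← Finset.sum_sub_distrib]
  refine Finset.sum_congr rfl fun i _ => ?_
  rw [map_sub, aux6 p F m B D hdual, aux6 p F m D B hdual']
end

section
/- Let λ ∈ F_q \ {0, 1, −1}, m ≥ 1, and let C ⊆ F_q^{2mℓ} be an F_q-linear code that is invariant under the map applying the λ-constashift by ℓ positions to the left half and the λ^{−1}-constashift by ℓ positions to the right half simultaneously. Then C = C₁ × C₂, where C₁ = {c₁ : (c₁|c₂) ∈ C for some c₂} and C₂ = {c₂ : (c₁|c₂) ∈ C for some c₁}; i.e., (c₁|c₂) ∈ C implies (c₁|0) ∈ C and (0|c₂) ∈ C. -/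
/-- The `λ`-constashift by `ℓ` positions on `F^{mℓ}` (vectors viewed as `m × ℓ`
arrays, i.e. functions `ZMod m → (Fin ℓ → F)` shifting rows cyclically and
multiplying the wrapped-around row by `λ`). -/
def constashift {F : Type} [Field F] {m ℓ : ℕ} (lam : F)
    (v : ZMod m → Fin ℓ → F) : ZMod m → Fin ℓ → F :=
  fun i => (if i = 0 then lam else 1) • v (i - 1)

lemma constashift_iterate {F : Type} [Field F] {m ℓ : ℕ} [NeZero m] (lam : F)
    (v : ZMod m → Fin ℓ → F) :
    ∀ k, k ≤ m → (constashift lam)^[k] v =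
      fun i => (if i.val < k then lam else 1) • v (i - (k : ZMod m)) := by
  intro k
  induction k with
  | zero => intro _; funext i; simp
  | succ k ih =>
    intro hk
    have hk' : k ≤ m := Nat.le_of_succ_le hk
    funext i
    rw [Function.iterate_succ_apply', ih hk']
    show (if i = 0 then lam else 1) •
        ((if (i - 1).val < k then lam else 1) • v (i - 1 - (k : ZMod m))) = _
    have hidx : i - 1 - (k : ZMod m) = i - ((k + 1 : ℕ) : ZMod m) := by
      push_cast; ring
    rw [hidx, smul_smul]
    by_cases hi : i = 0
    · subst hi
      have hm1 : (0 - 1 : ZMod m).val = m - 1 := by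
        obtain ⟨m', rfl⟩ := Nat.exists_eq_succ_of_ne_zero (NeZero.ne m)
        simpa using ZMod.val_neg_one m'
      have hnotlt : ¬ (0 - 1 : ZMod m).val < k := by
        rw [hm1]
        omega
      have hlt : (0 : ZMod m).val < k + 1 := by
        simp [ZMod.val_zero]
      rw [if_pos rfl, if_neg hnotlt, if_pos hlt, mul_one]
    · have hne1 : m ≠ 1 := by
        rintro rfl
        exact hi (Subsingleton.elim _ _)
      have hm2 : 1 < m := by
        have := Nat.pos_of_ne_zero (NeZero.ne m); omega
      have hvi : i.val ≠ 0 := fun h => hi ((ZMod.val_eq_zero i).mp h)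
      have hval1 : (1 : ZMod m).val = 1 := ZMod.val_one_eq_one_mod m ▸ Nat.mod_eq_of_lt hm2
      have hsub : (i - 1).val = i.val - 1 := by
        rw [ZMod.val_sub (by rw [hval1]; omega), hval1]
      have hcond : ((i - 1).val < k) ↔ (i.val < k + 1) := by
        rw [hsub]; omega
      by_cases h : i.val < k + 1
      · simp [hi, hcond.mpr h, h]
      · simp [hi, (not_iff_not.mpr hcond).mpr h, h]

lemma constashift_iterate_self {F : Type} [Field F] {m ℓ : ℕ} [NeZero m] (lam : F)
    (v : ZMod m → Fin ℓ → F) :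
    (constashift lam)^[m] v = lam • v := by
  rw [constashift_iterate lam v m le_rfl]
  funext i
  have : i.val < m := ZMod.val_lt i
  simp [this, ZMod.natCast_self]

/-- If `C ⊆ F_q^{2mℓ}` is linear and invariant under the simultaneous
`λ`-constashift on the left half and `λ⁻¹`-constashift on the right half,
with `λ ∉ {0,1,-1}`, then `C = C₁ × C₂`:
`(c₁|c₂) ∈ C` implies `(c₁|0) ∈ C` and `(0|c₂) ∈ C`. -/
theorem stmt15 (F : Type) [Field F] (m ℓ : ℕ) [NeZero m]
    (lam : F) (h0 : lam ≠ 0) (h1 : lam ≠ 1) (h2 : lam ≠ -1)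
    (C : Submodule F ((ZMod m → Fin ℓ → F) × (ZMod m → Fin ℓ → F)))
    (hinv : ∀ c ∈ C, (constashift lam c.1, constashift lam⁻¹ c.2) ∈ C) :
    ∀ c ∈ C, ((c.1, 0) : _ × _) ∈ C ∧ ((0, c.2) : _ × _) ∈ C := by
  intro c hc
  have hiter : ∀ k, (((constashift lam)^[k] c.1, (constashift lam⁻¹)^[k] c.2) : _ × _) ∈ C := by
    intro k
    induction k with
    | zero => simpa using hc
    | succ k ih =>
      have := hinv _ ih
      simpa [Function.iterate_succ_apply'] using this
  have hb : ((lam • c.1, lam⁻¹ • c.2) : _ × _) ∈ C := by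
    have := hiter m
    rwa [constashift_iterate_self, constashift_iterate_self] at this
  have hne : lam - lam⁻¹ ≠ 0 := by
    intro h
    rw [sub_eq_zero] at h
    have h' : lam * lam = 1 := by
      nth_rewrite 2 [h]
      exact mul_inv_cancel₀ h0
    rcases mul_self_eq_one_iff.mp h' with h'' | h''
    · exact h1 h''
    · exact h2 h''
  have h02 : ((0, c.2) : _ × _) ∈ C := by
    have hmem := C.smul_mem (lam - lam⁻¹)⁻¹ (C.sub_mem (C.smul_mem lam hc) hb)
    have heq : ((0, c.2) : _ × _) = (lam - lam⁻¹)⁻¹ • (lam • c - (lam • c.1, lam⁻¹ • c.2)) := by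
      refine Prod.ext ?_ ?_
      · funext i j
        simp only [Prod.smul_snd, Prod.snd_sub, Prod.smul_fst, Prod.fst_sub,
          Pi.smul_apply, Pi.sub_apply, Pi.zero_apply, smul_eq_mul]
        ring
      · funext i j
        simp only [Prod.smul_snd, Prod.snd_sub, Pi.smul_apply, Pi.sub_apply, smul_eq_mul]
        rw [show lam * c.2 i j - lam⁻¹ * c.2 i j = (lam - lam⁻¹) * c.2 i j from by ring,
          inv_mul_cancel_left₀ hne]
    rw [heq]
    exact hmem
  refine ⟨?_, h02⟩
  have hmem := C.sub_mem hc h02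
  have heq : ((c.1, 0) : _ × _) = c - (0, c.2) := by
    refine Prod.ext ?_ ?_ <;> simp
  rw [heq]
  exact hmem
end

section
/- Let C ⊆ F_{q^2}^n be an F_{q^2}-linear code with Hermitian hull H = C ∩ C^{⊥H} of dimension s = k − e, where k = dim C. Suppose B ∈ F_{q^2}^{e×n} is a matrix whose rows form a Hermitian orthonormal basis of a complement of H in C (so BB* = I_e and BM* = 0 for M a generator matrix of H), and β ∈ F_{q^2} satisfies β^{q+1} = −1. Then the code C' ⊆ F_{q^2}^{n+e} generated by the rows of the block matrix [[M, 0],[B, βI_e]] is Hermitian self-orthogonal of dimension k. -/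
/-- Extending a nearly Hermitian self-orthogonal code: if `M` generates the
Hermitian hull, the rows of `B` are a Hermitian orthonormal basis of a complement
of the hull in the code (`BB* = I`, `BM* = 0`, `MM* = 0`, `MB* = 0`), and
`β^{q+1} = −1`, then the code generated by the rows of `[[M 0],[B βI]]` in
`F_{q^2}^{n+e}` is Hermitian self-orthogonal of dimension `s + e`. -/
theorem stmt19 (p t q : ℕ) (hp : p.Prime) (hq : q = p ^ t)
    (K : Type) [Field K] [Fintype K] (hcard : Fintype.card K = q ^ 2)
    (n s e : ℕ)
    (M : Matrix (Fin s) (Fin n) K) (B : Matrix (Fin e) (Fin n) K)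
    (β : K) (hβ : β ^ (q + 1) = -1)
    (hMM : ∀ i j, (∑ u, M i u * (M j u) ^ q) = 0)
    (hBM : ∀ i j, (∑ u, B i u * (M j u) ^ q) = 0)
    (hMB : ∀ i j, (∑ u, M i u * (B j u) ^ q) = 0)
    (hBB : ∀ i j, (∑ u, B i u * (B j u) ^ q) = (if i = j then 1 else 0 : K))
    (hli : LinearIndependent K (Sum.elim M B))
    (r : Fin s ⊕ Fin e → (Fin n ⊕ Fin e → K))
    (hr : r = Sum.elim (fun i => Sum.elim (M i) 0)
      (fun j => Sum.elim (B j) (fun u => if u = j then β else 0))) :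
    (∀ x ∈ Submodule.span K (Set.range r), ∀ y ∈ Submodule.span K (Set.range r),
        (∑ u, x u * (y u) ^ q) = 0) ∧
      Module.finrank K (Submodule.span K (Set.range r)) = s + e := by
  haveI : Fact p.Prime := ⟨hp⟩
  -- char of K is p
  have hrc : CharP K (ringChar K) := ringChar.charP K
  obtain ⟨m, hrp, hcard'⟩ := FiniteField.card K (ringChar K)
  have ht : t ≠ 0 := by
    rintro rfl
    simp [hq] at hcard
    have := Fintype.one_lt_card (α := K)
    omega
  have hq0 : q ≠ 0 := by
    rw [hq]; exact pow_ne_zero _ hp.pos.ne'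
  have hpr : p = ringChar K := by
    have hd : p ∣ ringChar K ^ (m : ℕ) := by
      rw [← hcard', hcard, hq]
      exact dvd_pow (dvd_pow_self p ht) (by norm_num)
    exact (Nat.prime_dvd_prime_iff_eq hp hrp).mp (hp.dvd_of_dvd_pow hd)
  haveI hcp : CharP K p := hpr ▸ hrc
  have hfrob : ∀ a b : K, (a + b) ^ q = a ^ q + b ^ q := by
    intro a b; rw [hq]; exact add_pow_char_pow a b p t
  -- linear independence of r
  have hli' : LinearIndependent K r := by
    apply LinearIndependent.of_comp (LinearMap.funLeft K K Sum.inl)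
    have : (⇑(LinearMap.funLeft K K Sum.inl (m := Fin n) (n := Fin n ⊕ Fin e)) ∘ r)
        = Sum.elim M B := by
      funext a; cases a with
      | inl i => funext u; simp [hr, LinearMap.funLeft]; rfl
      | inr j => funext u; simp [hr, LinearMap.funLeft]; rfl
    rw [this]; exact hli
  constructor
  · -- orthogonality on generators
    have hgen : ∀ a b, (∑ u, r a u * (r b u) ^ q) = 0 := by
      intro a b
      rw [Fintype.sum_sum_type]
      cases a with
      | inl i =>
        cases b with
        | inl j =>
          simp only [hr, Sum.elim_inl, Sum.elim_inr, Pi.zero_apply]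
          simpa using hMM i j
        | inr j =>
          simp only [hr, Sum.elim_inl, Sum.elim_inr, Pi.zero_apply]
          simpa using hMB i j
      | inr i =>
        cases b with
        | inl j =>
          simp only [hr, Sum.elim_inl, Sum.elim_inr, Pi.zero_apply]
          simpa [zero_pow hq0] using hBM i j
        | inr j =>
          simp only [hr, Sum.elim_inl, Sum.elim_inr]
          rw [hBB i j]
          have : ∑ u : Fin e, (if u = i then β else 0) * (if u = j then β else 0) ^ q
              = if i = j then β ^ (q + 1) else 0 := by
            rw [Finset.sum_eq_single i]
            · simp only [if_pos rfl]
              by_cases h : i = j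
              · subst h; simp [pow_succ', pow_succ]
              · simp [h, zero_pow hq0]
            · intro u _ hu; simp [hu]
            · intro h; simp at h
          rw [this, hβ]
          by_cases h : i = j <;> simp [h]
    -- extend to span: first fix x a generator
    intro x hx y hy
    have key : ∀ y ∈ Submodule.span K (Set.range r), ∀ a,
        (∑ u, r a u * (y u) ^ q) = 0 := by
      intro y hy
      induction hy using Submodule.span_induction with
      | mem z hz =>
        obtain ⟨b, rfl⟩ := hz
        intro a; exact hgen a b
      | zero => intro a; simp [zero_pow hq0]
      | add y z _ _ ihy ihz =>
        intro a
        have : ∀ u, r a u * ((y + z) u) ^ q = r a u * (y u) ^ q + r a u * (z u) ^ q := by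
          intro u; rw [Pi.add_apply, hfrob]; ring
        simp only [this, Finset.sum_add_distrib, ihy a, ihz a, add_zero]
      | smul c y _ ih =>
        intro a
        have : ∀ u, r a u * ((c • y) u) ^ q = c ^ q * (r a u * (y u) ^ q) := by
          intro u; rw [Pi.smul_apply, smul_eq_mul, mul_pow]; ring
        simp only [this, ← Finset.mul_sum, ih a, mul_zero]
    induction hx using Submodule.span_induction with
    | mem z hz =>
      obtain ⟨a, rfl⟩ := hz
      exact key y hy a
    | zero => simp
    | add x z _ _ ihx ihz =>
      have : ∀ u, (x + z) u * (y u) ^ q = x u * (y u) ^ q + z u * (y u) ^ q := by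
        intro u; rw [Pi.add_apply]; ring
      simp only [this, Finset.sum_add_distrib, ihx, ihz, add_zero]
    | smul c x _ ih =>
      have : ∀ u, (c • x) u * (y u) ^ q = c * (x u * (y u) ^ q) := by
        intro u; rw [Pi.smul_apply, smul_eq_mul]; ring
      simp only [this, ← Finset.mul_sum, ih, mul_zero]
  · rw [finrank_span_eq_card hli']
    simp
end
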